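/- Let MVT^n_a(1^k) be the set of multiset-valued tableaux of single-column shape with k boxes, entries at most n, and total excess a (total number of entries minus k equals a). Then the map sending such a column with box contents m_j together with extra entries o_1 ≤ ... ≤ o_a (listed row by row) to the hook-shaped semistandard tableau with first row (m_1, o_1, ..., o_a) and first column (m_1, m_2, ..., m_k) is a bijection onto the set of semistandard Young tableaux of hook shape (a+1, 1^{k-1}) with entries at most n, and this bijection preserves reading words. -/

import Mathlib

/-! Signature rule on words: `+` for letter `i`, `-` for letter `i+1`,
cancel ordered pairs `-+`, leaving `+^p -^m`. -/

/-- Scanning left to right, returns (number of uncanceled `+`, number of uncanceled `-`). -/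
def sigFold (i : ℕ) (w : List ℕ) : ℕ × ℕ :=
  w.foldl (fun pm a =>
    if a = i then (if 0 < pm.2 then (pm.1, pm.2 - 1) else (pm.1 + 1, pm.2))
    else if a = i + 1 then (pm.1, pm.2 + 1) else pm) (0, 0)

/-- Position of the rightmost uncanceled `+` (a letter `i`). -/
def fPos (i : ℕ) (w : List ℕ) : Option ℕ :=
  ((List.range w.length).filter
    (fun j => decide (w[j]? = some i ∧ (sigFold i (w.take j)).2 = 0))).getLast?

/-- Position of the leftmost uncanceled `-` (a letter `i+1`). -/
def ePos (i : ℕ) (w : List ℕ) : Option ℕ :=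
  ((List.range w.length).filter
    (fun j => decide (w[j]? = some (i + 1) ∧ (sigFold i (w.drop (j + 1))).1 = 0))).head?

/-- The crystal operator `f_i` on words: change the `i` at the rightmost uncanceled `+`
into an `i+1`. -/
def fWord (i : ℕ) (w : List ℕ) : Option (List ℕ) :=
  (fPos i w).map (fun j => w.set j (i + 1))

/-- The crystal operator `e_i` on words: change the `i+1` at the leftmost uncanceled `-`
into an `i`. -/
def eWord (i : ℕ) (w : List ℕ) : Option (List ℕ) :=
  (ePos i w).map (fun j => w.set j i)

/-! Multiset-valued tableaux. -/

/-- `sh` is a partition: weakly decreasing list of positive integers. -/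
def IsPartition (sh : List ℕ) : Prop :=
  sh.Pairwise (· ≥ ·) ∧ ∀ x ∈ sh, 0 < x

/-- The box in row `r`, column `c` (both 0-indexed) belongs to the Young diagram of `sh`. -/
abbrev InShape (sh : List ℕ) (r c : ℕ) : Prop := c < sh.getD r 0

/-- A (semistandard) multiset-valued tableau of shape `sh` with entries in `{1, …, n}`:
every box of the shape is filled with a finite nonempty multiset, rows weakly increase
(max of a box ≤ min of the box to its right) and columns strictly increase. -/
def IsMVT (n : ℕ) (sh : List ℕ) (T : ℕ → ℕ → Multiset ℕ) : Prop :=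
  (∀ r c, InShape sh r c → T r c ≠ 0) ∧
  (∀ r c, ¬ InShape sh r c → T r c = 0) ∧
  (∀ r c, ∀ x ∈ T r c, 1 ≤ x ∧ x ≤ n) ∧
  (∀ r c, InShape sh r (c + 1) → ∀ x ∈ T r c, ∀ y ∈ T r (c + 1), x ≤ y) ∧
  (∀ r c, InShape sh (r + 1) c → ∀ x ∈ T r c, ∀ y ∈ T (r + 1) c, x < y)

/-- Number of boxes in column `c` of the shape `sh`. -/
def colHeight (sh : List ℕ) (c : ℕ) : ℕ := (sh.filter (fun p => decide (c < p))).length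

/-- Sort a multiset increasingly into a list. -/
def msort (M : Multiset ℕ) : List ℕ := M.sort (· ≤ ·)

/-- Column reading word: the smallest entry of each box from bottom to top, then the
remaining entries of each box, smallest to largest, boxes top to bottom. -/
def colWord (sh : List ℕ) (T : ℕ → ℕ → Multiset ℕ) (c : ℕ) : List ℕ :=
  ((List.range (colHeight sh c)).reverse.map (fun r => (msort (T r c)).take 1)).flatten
    ++ ((List.range (colHeight sh c)).map (fun r => (msort (T r c)).drop 1)).flatten

/-- The boxes corresponding to the letters of `colWord`, in order. -/
def colBoxes (sh : List ℕ) (T : ℕ → ℕ → Multiset ℕ) (c : ℕ) : List (ℕ × ℕ) :=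
  ((List.range (colHeight sh c)).reverse.map
      (fun r => ((msort (T r c)).take 1).map (fun _ => (r, c)))).flatten
    ++ ((List.range (colHeight sh c)).map
      (fun r => ((msort (T r c)).drop 1).map (fun _ => (r, c)))).flatten

/-- The reading word of a multiset-valued tableau: column reading words, columns left to right. -/
def mvtWord (sh : List ℕ) (T : ℕ → ℕ → Multiset ℕ) : List ℕ :=
  ((List.range (sh.headD 0)).map (colWord sh T)).flatten

/-- The boxes corresponding to the letters of `mvtWord`, in order. -/
def mvtBoxes (sh : List ℕ) (T : ℕ → ℕ → Multiset ℕ) : List (ℕ × ℕ) :=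
  ((List.range (sh.headD 0)).map (colBoxes sh T)).flatten

/-- The crystal operator `f_i` on multiset-valued tableaux: act on the box `b` of the
rightmost uncanceled `+`; if the box below `b` contains an `i+1`, move the `i` from `b`
to an `i+1` in that box, otherwise replace the `i` in `b` by an `i+1`. -/
def mvtF (sh : List ℕ) (i : ℕ) (T : ℕ → ℕ → Multiset ℕ) :
    Option (ℕ → ℕ → Multiset ℕ) :=
  (fPos i (mvtWord sh T)).map (fun j =>
    let rc := (mvtBoxes sh T).getD j (0, 0)
    let r := rc.1
    let c := rc.2
    if (i + 1) ∈ T (r + 1) c then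
      fun r' c' =>
        if r' = r ∧ c' = c then T r c - {i}
        else if r' = r + 1 ∧ c' = c then T (r + 1) c + {i + 1}
        else T r' c'
    else
      fun r' c' => if r' = r ∧ c' = c then (T r c - {i}) + {i + 1} else T r' c')

/-- The crystal operator `e_i` on multiset-valued tableaux: act on the box `b` of the
leftmost uncanceled `-`; if the box above `b` contains an `i`, move the `i+1` from `b`
to an `i` in that box, otherwise replace the `i+1` in `b` by an `i`. -/
def mvtE (sh : List ℕ) (i : ℕ) (T : ℕ → ℕ → Multiset ℕ) :
    Option (ℕ → ℕ → Multiset ℕ) :=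
  (ePos i (mvtWord sh T)).map (fun j =>
    let rc := (mvtBoxes sh T).getD j (0, 0)
    let r := rc.1
    let c := rc.2
    if 0 < r ∧ i ∈ T (r - 1) c then
      fun r' c' =>
        if r' = r ∧ c' = c then T r c - {i + 1}
        else if r' = r - 1 ∧ c' = c then T (r - 1) c + {i}
        else T r' c'
    else
      fun r' c' => if r' = r ∧ c' = c then (T r c - {i + 1}) + {i} else T r' c')

/-- A multiset-valued tableau is highest weight if it is killed by all raising operators. -/
def MvtHW (sh : List ℕ) (T : ℕ → ℕ → Multiset ℕ) : Prop :=
  ∀ i, 1 ≤ i → mvtE sh i T = none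

/-- Minimum entry of the box in row `r` of a single-column tableau. -/
def minEntry (T : ℕ → ℕ → Multiset ℕ) (r : ℕ) : ℕ := (msort (T r 0)).headD 0

/-- The extra (non-minimal) entries of a single-column multiset-valued tableau with `k`
boxes, listed increasingly. -/
def extras (T : ℕ → ℕ → Multiset ℕ) (k : ℕ) : List ℕ :=
  Multiset.sort
    (((List.range k).map (fun r => (msort (T r 0)).drop 1)).flatten : Multiset ℕ) (· ≤ ·)

/-- Total number of entries of a single-column multiset-valued tableau with `k` boxes. -/
def colEntries (T : ℕ → ℕ → Multiset ℕ) (k : ℕ) : ℕ :=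
  ∑ r ∈ Finset.range k, Multiset.card (T r 0)

/-- The hook shape `(a+1, 1^{k-1})`. -/
def hookShape (k a : ℕ) : List ℕ := (a + 1) :: List.replicate (k - 1) 1

/-- The map of Proposition `columns → hooks`: first row `(m_1, o_1, …, o_a)`,
first column `(m_1, …, m_k)`. -/
def psi (k : ℕ) (T : ℕ → ℕ → Multiset ℕ) : ℕ → ℕ → Multiset ℕ := fun r c =>
  if r = 0 then
    (if c = 0 then {minEntry T 0}
     else if c < colEntries T k - k + 1 then {(extras T k).getD (c - 1) 0} else 0)
  else if c = 0 ∧ r < k then {minEntry T r} else 0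



lemma msort_coe (M : Multiset ℕ) : (↑(msort M) : Multiset ℕ) = M := Multiset.sort_eq _ _
lemma msort_sorted (M : Multiset ℕ) : (msort M).Pairwise (· ≤ ·) := Multiset.pairwise_sort _ _
lemma mem_msort {x : ℕ} {M : Multiset ℕ} : x ∈ msort M ↔ x ∈ M := Multiset.mem_sort _
lemma msort_of_sorted (l : List ℕ) (h : l.Pairwise (· ≤ ·)) : msort ↑l = l :=
  List.Perm.eq_of_pairwise' (msort_sorted _) h (Multiset.coe_eq_coe.mp (msort_coe _))

def mhead (M : Multiset ℕ) : ℕ := (msort M).headD 0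

lemma mhead_mem {M : Multiset ℕ} (h : M ≠ 0) : mhead M ∈ M := by
  have hne : msort M ≠ [] := by
    intro hn; apply h; rw [← msort_coe M, hn]; rfl
  rw [← mem_msort, mhead]
  cases hl : msort M with
  | nil => exact absurd hl hne
  | cons x t => simp [hl]

lemma mhead_le {M : Multiset ℕ} {x : ℕ} (hx : x ∈ M) : mhead M ≤ x := by
  rw [← mem_msort] at hx
  rcases hl : msort M with _ | ⟨y, t⟩
  · rw [hl] at hx; simp at hx
  · rw [hl] at hx
    have := msort_sorted M; rw [hl, List.pairwise_cons] at this
    rcases List.mem_cons.mp hx with h | h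
    · simp [mhead, hl, h]
    · simp only [mhead, hl, List.headD_cons]; exact this.1 x h

lemma mhead_eq {M : Multiset ℕ} {m : ℕ} (hm : m ∈ M) (hle : ∀ x ∈ M, m ≤ x) :
    mhead M = m :=
  le_antisymm (mhead_le hm) (hle _ (mhead_mem (by rintro rfl; simp at hm)))

lemma take_one_of_ne_nil {l : List ℕ} (h : l ≠ []) : l.take 1 = [l.headD 0] := by
  cases l with
  | nil => exact absurd rfl h
  | cons x t => simp

lemma msort_ne_nil {M : Multiset ℕ} (h : M ≠ 0) : msort M ≠ [] := by
  intro hn; apply h; rw [← msort_coe M, hn]; rfl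

lemma multiset_decomp {M : Multiset ℕ} (h : M ≠ 0) :
    M = {mhead M} + ↑((msort M).drop 1) := by
  conv_lhs => rw [← msort_coe M]
  rw [← List.take_append_drop 1 (msort M), take_one_of_ne_nil (msort_ne_nil h)]
  simp [mhead]



lemma getD_replicate (k r : ℕ) : (List.replicate k 1).getD r 0 = if r < k then 1 else 0 := by
  split
  · rw [List.getD_eq_getElem _ _ (by simpa)]; simp
  · rw [List.getD_eq_default]; simpa using by omega

lemma inShape_col {k r c : ℕ} : InShape (List.replicate k 1) r c ↔ c = 0 ∧ r < k := by
  simp only [InShape, getD_replicate]; split <;> omega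

lemma getD_hook (k a r : ℕ) (hk : 0 < k) :
    (hookShape k a).getD r 0 = if r = 0 then a + 1 else if r < k then 1 else 0 := by
  rcases r with _ | r
  · simp [hookShape]
  · simp only [hookShape, List.getD_cons_succ, getD_replicate]
    rw [if_neg (by omega : ¬ (r + 1 = 0))]
    by_cases h : r < k - 1 <;> by_cases h2 : r + 1 < k <;> simp [h, h2] <;> omega

lemma inShape_hook {k a r c : ℕ} (hk : 0 < k) :
    InShape (hookShape k a) r c ↔ (r = 0 ∧ c < a + 1) ∨ (0 < r ∧ r < k ∧ c = 0) := by
  simp only [InShape, getD_hook k a r hk]; split <;> [skip; split] <;> omega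

lemma colHeight_col (k : ℕ) : colHeight (List.replicate k 1) 0 = k := by
  simp [colHeight, List.filter_replicate]

lemma colHeight_hook_zero (k a : ℕ) (hk : 0 < k) : colHeight (hookShape k a) 0 = k := by
  simp [colHeight, hookShape, List.filter_replicate]; omega

lemma colHeight_hook_pos (k a c : ℕ) (hc : 0 < c) :
    colHeight (hookShape k a) c = if c < a + 1 then 1 else 0 := by
  simp only [colHeight, hookShape, List.filter_cons]
  have : (List.replicate (k-1) 1).filter (fun p => decide (c < p)) = [] := by
    rw [List.filter_replicate]; simp; omega
  split <;> rename_i h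
  · simp only [decide_eq_true_eq] at h
    rw [if_pos (by omega), this]; simp
  · simp only [decide_eq_true_eq] at h
    rw [if_neg (by omega), this]; simp

lemma flatten_singletons {α : Type*} (l : List ℕ) (f : ℕ → α) :
    (l.map (fun r => [f r])).flatten = l.map f := by
  induction l with
  | nil => rfl
  | cons x t ih => simp [ih]

lemma map_getD_range (l : List ℕ) : (List.range l.length).map (fun j => l.getD j 0) = l := by
  apply List.ext_getElem (by simp)
  intro i h1 h2
  simp only [List.getElem_map, List.getElem_range]
  rw [List.getD_eq_getElem _ _ h2]

section ColLemmas

variable {n k : ℕ} {T : ℕ → ℕ → Multiset ℕ}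

lemma col_ne (hT : IsMVT n (List.replicate k 1) T) {r : ℕ} (hr : r < k) : T r 0 ≠ 0 :=
  hT.1 r 0 (inShape_col.mpr ⟨rfl, hr⟩)

lemma col_lt (hT : IsMVT n (List.replicate k 1) T) {r : ℕ} (hr : r + 1 < k) :
    ∀ x ∈ T r 0, ∀ y ∈ T (r + 1) 0, x < y :=
  hT.2.2.2.2 r 0 (inShape_col.mpr ⟨rfl, hr⟩)

lemma col_chain (hT : IsMVT n (List.replicate k 1) T) :
    ∀ r', r' < k → ∀ r, r < r' → ∀ x ∈ T r 0, ∀ y ∈ T r' 0, x < y := by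
  intro r'
  induction r' with
  | zero => omega
  | succ m ih =>
    intro hm r hr x hx y hy
    rcases Nat.lt_succ_iff_lt_or_eq.mp hr with h | rfl
    · have hmem := mhead_mem (col_ne hT (show m < k by omega))
      exact lt_trans (ih (by omega) r h x hx _ hmem) (col_lt hT hm _ hmem y hy)
    · exact col_lt hT hm x hx y hy

lemma minEntry_eq_mhead (r : ℕ) : minEntry T r = mhead (T r 0) := rfl

lemma minEntry_mem (hT : IsMVT n (List.replicate k 1) T) {r : ℕ} (hr : r < k) :
    minEntry T r ∈ T r 0 := mhead_mem (col_ne hT hr)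

lemma minEntry_strict (hT : IsMVT n (List.replicate k 1) T) {r r' : ℕ} (h : r < r')
    (hr' : r' < k) : minEntry T r < minEntry T r' :=
  col_chain hT r' hr' r h _ (minEntry_mem hT (lt_trans h hr')) _ (minEntry_mem hT hr')

/-- The flattened list of non-minimal entries, row by row. -/
def dropsList (T : ℕ → ℕ → Multiset ℕ) (k : ℕ) : List ℕ :=
  ((List.range k).map (fun r => (msort (T r 0)).drop 1)).flatten

lemma mem_dropsList {x : ℕ} :
    x ∈ dropsList T k ↔ ∃ r, r ∈ List.range k ∧ x ∈ (msort (T r 0)).drop 1 := by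
  simp [dropsList]

lemma mem_of_mem_drops {x r : ℕ} (h : x ∈ (msort (T r 0)).drop 1) : x ∈ T r 0 :=
  mem_msort.mp (List.mem_of_mem_drop h)

lemma dropsList_sorted (hT : IsMVT n (List.replicate k 1) T) :
    (dropsList T k).Pairwise (· ≤ ·) := by
  rw [dropsList, List.pairwise_flatten]
  constructor
  · intro l hl
    simp only [List.mem_map] at hl
    obtain ⟨r, _, rfl⟩ := hl
    exact (msort_sorted _).drop
  · rw [List.pairwise_map]
    have : List.Pairwise (· < ·) (List.range k) := List.pairwise_lt_range (n := k)
    refine this.imp_of_mem ?_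
    intro r r' hr hr' hlt x hx y hy
    simp only [List.mem_range] at hr hr'
    exact le_of_lt (col_chain hT r' hr' r hlt x (mem_of_mem_drops hx) y (mem_of_mem_drops hy))

lemma extras_eq_dropsList (hT : IsMVT n (List.replicate k 1) T) :
    extras T k = dropsList T k :=
  msort_of_sorted _ (dropsList_sorted hT)

lemma colEntries_eq (hT : IsMVT n (List.replicate k 1) T) :
    colEntries T k = k + (dropsList T k).length := by
  have : (dropsList T k).length = ∑ r ∈ Finset.range k, ((msort (T r 0)).drop 1).length := by
    rw [dropsList, List.length_flatten, List.map_map]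
    rfl
  rw [this, colEntries]
  have h1 : ∀ r ∈ Finset.range k, Multiset.card (T r 0) = 1 + ((msort (T r 0)).drop 1).length := by
    intro r hr
    have hne := msort_ne_nil (col_ne hT (Finset.mem_range.mp hr))
    have hlen : Multiset.card (T r 0) = (msort (T r 0)).length := by
      conv_lhs => rw [← msort_coe (T r 0)]
      exact Multiset.coe_card _
    rw [hlen, List.length_drop]
    have : 0 < (msort (T r 0)).length := List.length_pos_iff.mpr hne
    omega
  rw [Finset.sum_congr rfl h1, Finset.sum_add_distrib]
  simp

lemma extras_length (hT : IsMVT n (List.replicate k 1) T) {a : ℕ}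
    (hE : colEntries T k = k + a) : (extras T k).length = a := by
  rw [extras_eq_dropsList hT]
  have := colEntries_eq hT
  omega

end ColLemmas


section PsiLemmas

variable {n k a : ℕ} {T : ℕ → ℕ → Multiset ℕ}

lemma msort_singleton (x : ℕ) : msort {x} = [x] := Multiset.sort_singleton x _

lemma psi_col0 {r : ℕ} (hr : r < k) : psi k T r 0 = {minEntry T r} := by
  rcases r with _ | r
  · simp [psi]
  · simp [psi, hr]

lemma psi_row0 (hE : colEntries T k = k + a) {c : ℕ} (hc1 : 0 < c) (hc2 : c < a + 1) :
    psi k T 0 c = {(extras T k).getD (c - 1) 0} := by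
  unfold psi
  rw [hE, if_pos rfl, if_neg (by omega), if_pos (by omega)]

lemma psi_zero (hk : 0 < k) (hE : colEntries T k = k + a) {r c : ℕ}
    (h : ¬ InShape (hookShape k a) r c) : psi k T r c = 0 := by
  rw [inShape_hook hk] at h
  push_neg at h
  unfold psi
  rw [hE]
  split_ifs with h1 h2 h3 h4 <;> first | rfl | (exfalso; omega)

lemma word_col (hk : 0 < k) (hT : IsMVT n (List.replicate k 1) T) :
    mvtWord (List.replicate k 1) T
      = (List.range k).reverse.map (minEntry T) ++ extras T k := by
  have hhead : (List.replicate k 1).headD 0 = 1 := by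
    cases k with | zero => omega | succ m => rfl
  rw [mvtWord, hhead]
  rw [show List.range 1 = [0] from rfl]
  simp only [List.map_cons, List.map_nil, List.flatten_cons,
    List.flatten_nil, List.append_nil]
  rw [colWord, colHeight_col]
  congr 1
  · have hc : ∀ r ∈ (List.range k).reverse, (msort (T r 0)).take 1 = [minEntry T r] := by
      intro r hr
      rw [List.mem_reverse, List.mem_range] at hr
      rw [take_one_of_ne_nil (msort_ne_nil (col_ne hT hr))]
      rfl
    rw [List.map_congr_left hc, flatten_singletons]
  · rw [extras_eq_dropsList hT]
    rfl

lemma word_hook (hk : 0 < k) (hT : IsMVT n (List.replicate k 1) T)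
    (hE : colEntries T k = k + a) :
    mvtWord (hookShape k a) (psi k T)
      = (List.range k).reverse.map (minEntry T) ++ extras T k := by
  have hhead : (hookShape k a).headD 0 = a + 1 := rfl
  rw [mvtWord, hhead, List.range_succ_eq_map]
  simp only [List.map_cons, List.flatten_cons, List.map_map]
  have hA : colWord (hookShape k a) (psi k T) 0
      = (List.range k).reverse.map (minEntry T) := by
    rw [colWord, colHeight_hook_zero k a hk]
    have h1 : ∀ r ∈ (List.range k).reverse, (msort (psi k T r 0)).take 1 = [minEntry T r] := by
      intro r hr
      rw [List.mem_reverse, List.mem_range] at hr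
      rw [psi_col0 hr, msort_singleton]
      rfl
    have h2 : ∀ r ∈ List.range k, (msort (psi k T r 0)).drop 1 = ([] : List ℕ) := by
      intro r hr
      rw [List.mem_range] at hr
      rw [psi_col0 hr, msort_singleton]
      rfl
    rw [List.map_congr_left h1, flatten_singletons, List.map_congr_left h2]
    simp
  have hB : ∀ c ∈ List.range a, (colWord (hookShape k a) (psi k T) ∘ Nat.succ) c
      = [(extras T k).getD c 0] := by
    intro c hc
    rw [List.mem_range] at hc
    show colWord (hookShape k a) (psi k T) (c + 1) = _
    rw [colWord, colHeight_hook_pos k a (c + 1) (by omega), if_pos (by omega)]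
    rw [show List.range 1 = [0] from rfl]
    simp only [List.reverse_cons, List.reverse_nil, List.nil_append,
      List.map_cons, List.map_nil, List.flatten_cons, List.flatten_nil, List.append_nil]
    rw [psi_row0 hE (by omega) (by omega), Nat.add_sub_cancel, msort_singleton]
    rfl
  rw [hA, List.map_congr_left hB, flatten_singletons]
  congr 1
  have hlen := extras_length hT hE
  conv_lhs => rw [← hlen]
  exact map_getD_range _

end PsiLemmas


section Forward

variable {n k a : ℕ} {T : ℕ → ℕ → Multiset ℕ}

lemma getD_mem {l : List ℕ} {i : ℕ} (h : i < l.length) : l.getD i 0 ∈ l := by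
  rw [List.getD_eq_getElem _ _ h]
  exact List.getElem_mem _

lemma sorted_getD_mono {l : List ℕ} (hs : l.Pairwise (· ≤ ·)) {i j : ℕ} (hij : i ≤ j)
    (hj : j < l.length) : l.getD i 0 ≤ l.getD j 0 := by
  rw [List.getD_eq_getElem _ _ (lt_of_le_of_lt hij hj), List.getD_eq_getElem _ _ hj]
  rcases lt_or_eq_of_le hij with h | h
  · exact List.pairwise_iff_get.mp hs ⟨i, lt_of_le_of_lt hij hj⟩ ⟨j, hj⟩ h
  · subst h; rfl

lemma extras_sorted : (extras T k).Pairwise (· ≤ ·) := Multiset.pairwise_sort _ _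

lemma mem_extras (hT : IsMVT n (List.replicate k 1) T) {x : ℕ} (hx : x ∈ extras T k) :
    ∃ r < k, x ∈ T r 0 := by
  rw [extras_eq_dropsList hT, mem_dropsList] at hx
  obtain ⟨r, hr, hx⟩ := hx
  exact ⟨r, List.mem_range.mp hr, mem_of_mem_drops hx⟩

lemma min0_le (hT : IsMVT n (List.replicate k 1) T) {x r : ℕ} (hr : r < k)
    (hx : x ∈ T r 0) : minEntry T 0 ≤ x := by
  rcases Nat.eq_zero_or_pos r with rfl | hpos
  · exact mhead_le hx
  · exact le_of_lt (col_chain hT r hr 0 hpos _ (minEntry_mem hT (by omega)) x hx)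

lemma psi_forward (hk : 0 < k) (hT : IsMVT n (List.replicate k 1) T)
    (hE : colEntries T k = k + a) :
    IsMVT n (hookShape k a) (psi k T) ∧
      (∀ r c, InShape (hookShape k a) r c → Multiset.card (psi k T r c) = 1) := by
  have hlen : (extras T k).length = a := extras_length hT hE
  have hval : ∀ r c, InShape (hookShape k a) r c →
      (psi k T r c = {minEntry T r} ∧ c = 0) ∨
      (psi k T r c = {(extras T k).getD (c - 1) 0} ∧ r = 0 ∧ 0 < c ∧ c < a + 1) := by
    intro r c h
    rcases (inShape_hook hk).mp h with ⟨rfl, hc⟩ | ⟨h1, h2, rfl⟩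
    · rcases Nat.eq_zero_or_pos c with rfl | hcpos
      · exact Or.inl ⟨psi_col0 hk, rfl⟩
      · exact Or.inr ⟨psi_row0 hE hcpos hc, rfl, hcpos, hc⟩
    · exact Or.inl ⟨psi_col0 h2, rfl⟩
  have hbound : ∀ r c, ∀ x ∈ psi k T r c, 1 ≤ x ∧ x ≤ n := by
    intro r c x hx
    by_cases h : InShape (hookShape k a) r c
    · rcases hval r c h with ⟨heq, rfl⟩ | ⟨heq, rfl, hc1, hc2⟩
      · rw [heq, Multiset.mem_singleton] at hx
        subst hx
        have hr : r < k := by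
          rcases (inShape_hook hk).mp h with ⟨rfl, _⟩ | ⟨_, h2, _⟩
          · exact hk
          · exact h2
        exact hT.2.2.1 r 0 _ (minEntry_mem hT hr)
      · rw [heq, Multiset.mem_singleton] at hx
        subst hx
        have hmem : (extras T k).getD (c - 1) 0 ∈ extras T k := getD_mem (by omega)
        obtain ⟨r', hr', hm⟩ := mem_extras hT hmem
        exact hT.2.2.1 r' 0 _ hm
    · rw [psi_zero hk hE h] at hx
      simp at hx
  refine ⟨⟨?_, ?_, hbound, ?_, ?_⟩, ?_⟩
  · intro r c h
    rcases hval r c h with ⟨heq, _⟩ | ⟨heq, _⟩ <;> rw [heq] <;> simp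
  · intro r c h
    exact psi_zero hk hE h
  · -- rows
    intro r c h x hx y hy
    rcases (inShape_hook hk).mp h with ⟨rfl, hc⟩ | ⟨_, _, habs⟩
    · rcases Nat.eq_zero_or_pos c with rfl | hcpos
      · rw [psi_col0 hk, Multiset.mem_singleton] at hx
        rw [psi_row0 hE (by omega) hc, Multiset.mem_singleton] at hy
        subst hx; subst hy
        have hmem : (extras T k).getD 0 0 ∈ extras T k := getD_mem (by omega)
        obtain ⟨r', hr', hm⟩ := mem_extras hT hmem
        exact min0_le hT hr' hm
      · rw [psi_row0 hE hcpos (by omega), Multiset.mem_singleton] at hx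
        rw [psi_row0 hE (by omega) hc, Multiset.mem_singleton] at hy
        subst hx; subst hy
        exact sorted_getD_mono extras_sorted (by omega) (by omega)
    · omega
  · -- columns
    intro r c h x hx y hy
    rcases (inShape_hook hk).mp h with ⟨habs, _⟩ | ⟨_, h2, rfl⟩
    · omega
    · rw [psi_col0 (by omega : r < k), Multiset.mem_singleton] at hx
      rw [psi_col0 h2, Multiset.mem_singleton] at hy
      subst hx; subst hy
      exact minEntry_strict hT (by omega) h2
  · intro r c h
    rcases hval r c h with ⟨heq, _⟩ | ⟨heq, _⟩ <;> rw [heq] <;> simp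

end Forward


section Recovery

variable {n k a : ℕ}

lemma filter_finsum (s : Finset ℕ) (f : ℕ → Multiset ℕ) (p : ℕ → Prop) [DecidablePred p] :
    (∑ i ∈ s, f i).filter p = ∑ i ∈ s, (f i).filter p := by
  classical
  induction s using Finset.induction with
  | empty => simp
  | insert _ _ h ih => rw [Finset.sum_insert h, Finset.sum_insert h, Multiset.filter_add, ih]

/-- The predicate assigning an entry to row `r`. -/
def rowPred (m : ℕ → ℕ) (k r x : ℕ) : Prop := m r ≤ x ∧ (r + 1 = k ∨ x < m (r + 1))

instance (m : ℕ → ℕ) (k r : ℕ) : DecidablePred (rowPred m k r) := fun x => by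
  unfold rowPred; infer_instance

lemma recover {T : ℕ → ℕ → Multiset ℕ} (hT : IsMVT n (List.replicate k 1) T) {r : ℕ}
    (hr : r < k) :
    T r 0 = (∑ r' ∈ Finset.range k, T r' 0).filter (rowPred (minEntry T) k r) := by
  rw [filter_finsum]
  have key : ∀ r' ∈ Finset.range k,
      (T r' 0).filter (rowPred (minEntry T) k r) = if r' = r then T r 0 else 0 := by
    intro r' hr'
    rw [Finset.mem_range] at hr'
    split_ifs with h
    · subst h
      rw [Multiset.filter_eq_self]
      intro x hx
      refine ⟨mhead_le hx, ?_⟩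
      rcases Nat.eq_or_lt_of_le (Nat.succ_le_of_lt hr') with h | h
      · exact Or.inl h
      · exact Or.inr (col_lt hT h x hx _ (minEntry_mem hT h))
    · rw [Multiset.filter_eq_nil]
      intro x hx hP
      unfold rowPred at hP
      rcases Nat.lt_or_ge r' r with hlt | hge
      · have : x < minEntry T r := col_chain hT r hr r' hlt x hx _ (minEntry_mem hT hr)
        omega
      · have hgt : r < r' := by omega
        have hx2 : minEntry T (r + 1) ≤ x := by
          rcases Nat.eq_or_lt_of_le (Nat.succ_le_of_lt hgt) with h2 | h2
          · subst h2; exact mhead_le hx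
          · exact le_of_lt (col_chain hT r' hr' (r + 1) h2 _ (minEntry_mem hT (by omega)) x hx)
        rcases hP.2 with h3 | h3 <;> omega
  rw [Finset.sum_congr rfl key, Finset.sum_ite_eq' (Finset.range k) r (fun _ => T r 0)]
  rw [if_pos (Finset.mem_range.mpr hr)]

lemma sum_singletons (f : ℕ → ℕ) (j : ℕ) :
    ∑ r ∈ Finset.range j, ({f r} : Multiset ℕ) = ↑((List.range j).map f) := by
  induction j with
  | zero => rfl
  | succ m ih =>
    rw [Finset.sum_range_succ, ih, List.range_succ, List.map_append]
    rw [← Multiset.coe_singleton, Multiset.coe_add]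
    rfl

lemma totalM_decomp {T : ℕ → ℕ → Multiset ℕ} (hT : IsMVT n (List.replicate k 1) T) :
    ∑ r ∈ Finset.range k, T r 0
      = (↑((List.range k).map (minEntry T)) : Multiset ℕ) + ↑(extras T k) := by
  rw [extras_eq_dropsList hT]
  have : ∀ j ≤ k, ∑ r ∈ Finset.range j, T r 0
      = (↑((List.range j).map (minEntry T)) : Multiset ℕ) + ↑(dropsList T j) := by
    intro j hj
    induction j with
    | zero => rfl
    | succ m ih =>
      rw [Finset.sum_range_succ, ih (by omega)]
      have hdec := multiset_decomp (col_ne hT (show m < k by omega))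
      have h1 : (List.range (m + 1)).map (minEntry T)
          = (List.range m).map (minEntry T) ++ [minEntry T m] := by
        rw [List.range_succ, List.map_append]
        rfl
      have h2 : dropsList T (m + 1) = dropsList T m ++ (msort (T m 0)).drop 1 := by
        rw [dropsList, dropsList, List.range_succ, List.map_append, List.flatten_append]
        simp
      rw [h1, h2, ← Multiset.coe_add, ← Multiset.coe_add, Multiset.coe_singleton]
      conv_lhs => rw [hdec]
      rw [show mhead (T m 0) = minEntry T m from rfl]
      abel
  exact this k le_rfl

lemma psi_injective (hk : 0 < k) {T1 T2 : ℕ → ℕ → Multiset ℕ}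
    (hT1 : IsMVT n (List.replicate k 1) T1) (hE1 : colEntries T1 k = k + a)
    (hT2 : IsMVT n (List.replicate k 1) T2) (hE2 : colEntries T2 k = k + a)
    (h : psi k T1 = psi k T2) : T1 = T2 := by
  have hmin : ∀ r < k, minEntry T1 r = minEntry T2 r := by
    intro r hr
    have := congrFun (congrFun h r) 0
    rw [psi_col0 hr, psi_col0 hr] at this
    exact Multiset.singleton_inj.mp this
  have hex : extras T1 k = extras T2 k := by
    apply List.ext_getElem
    · rw [extras_length hT1 hE1, extras_length hT2 hE2]
    · intro i h1 h2
      have ha1 : i < a := by rw [extras_length hT1 hE1] at h1; exact h1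
      have := congrFun (congrFun h 0) (i + 1)
      rw [psi_row0 hE1 (by omega) (by omega : i + 1 < a + 1),
        psi_row0 hE2 (by omega) (by omega : i + 1 < a + 1)] at this
      have hD := Multiset.singleton_inj.mp this
      rw [Nat.add_sub_cancel] at hD
      rw [← List.getD_eq_getElem _ 0 h1, ← List.getD_eq_getElem _ 0 h2]
      exact hD
  have htot : ∑ r' ∈ Finset.range k, T1 r' 0 = ∑ r' ∈ Finset.range k, T2 r' 0 := by
    rw [totalM_decomp hT1, totalM_decomp hT2, hex]
    congr 2
    exact List.map_congr_left (fun r hr => hmin r (List.mem_range.mp hr))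
  funext r c
  rcases Nat.eq_zero_or_pos c with rfl | hc
  · rcases Nat.lt_or_ge r k with hr | hr
    · rw [recover hT1 hr, recover hT2 hr, htot]
      apply Multiset.filter_congr
      intro x _
      unfold rowPred
      rw [hmin r hr]
      rcases Nat.lt_or_ge (r + 1) k with h2 | h2
      · rw [hmin (r + 1) h2]
      · constructor <;> rintro ⟨ha, hb | hb⟩ <;> first | exact ⟨ha, Or.inl hb⟩ | omega
    · rw [hT1.2.1 r 0 (by rw [inShape_col]; omega), hT2.2.1 r 0 (by rw [inShape_col]; omega)]
  · rw [hT1.2.1 r c (by rw [inShape_col]; omega), hT2.2.1 r c (by rw [inShape_col]; omega)]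

end Recovery


section Surjective

variable {n k a : ℕ}

lemma card_finsum (s : Finset ℕ) (f : ℕ → Multiset ℕ) :
    Multiset.card (∑ i ∈ s, f i) = ∑ i ∈ s, Multiset.card (f i) := by
  classical
  induction s using Finset.induction with
  | empty => simp
  | insert _ _ h ih => rw [Finset.sum_insert h, Finset.sum_insert h, Multiset.card_add, ih]

lemma mono_of_strict (m : ℕ → ℕ) (k : ℕ) (hs : ∀ r, r + 1 < k → m r < m (r + 1)) :
    ∀ r r', r ≤ r' → r' < k → m r ≤ m r' := by
  intro r r'
  induction r' with
  | zero => intro h _; rw [Nat.le_zero.mp h]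
  | succ j ih =>
    intro h hlt
    rcases Nat.eq_or_lt_of_le h with rfl | h2
    · rfl
    · exact le_trans (ih (by omega) (by omega)) (le_of_lt (hs j hlt))

lemma partition_filter (m : ℕ → ℕ) (hk : 0 < k)
    (hstrict : ∀ r, r + 1 < k → m r < m (r + 1))
    (E : Multiset ℕ) (hE : ∀ x ∈ E, m 0 ≤ x) :
    ∑ r ∈ Finset.range k, E.filter (rowPred m k r) = E := by
  have hmono := mono_of_strict m k hstrict
  ext x
  rw [Multiset.count_sum']
  simp only [Multiset.count_filter]
  by_cases hxE : x ∈ E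
  · have hx0 : m 0 ≤ x := hE x hxE
    set r0 := Nat.findGreatest (fun r => m r ≤ x) (k - 1) with hr0def
    have hr0le : r0 ≤ k - 1 := Nat.findGreatest_le _
    have hr0P : m r0 ≤ x := Nat.findGreatest_spec (P := fun r => m r ≤ x) (m := 0) (Nat.zero_le _) hx0
    have hQ : rowPred m k r0 x := by
      refine ⟨hr0P, ?_⟩
      rcases Nat.eq_or_lt_of_le (show r0 + 1 ≤ k by omega) with h | h
      · exact Or.inl h
      · right
        have := Nat.findGreatest_is_greatest (show r0 < r0 + 1 by omega)
          (show r0 + 1 ≤ k - 1 by omega)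
        omega
    rw [Finset.sum_eq_single_of_mem r0 (Finset.mem_range.mpr (by omega))]
    · rw [if_pos hQ]
    · intro r hr hne
      rw [Finset.mem_range] at hr
      have hnQ : ¬ rowPred m k r x := by
        rintro ⟨hq1, hq2⟩
        rcases Nat.lt_or_ge r r0 with hlt | hge
        · have hle : m (r + 1) ≤ m r0 := hmono _ _ (by omega) (by omega)
          rcases hq2 with h | h <;> omega
        · have hgt : r0 < r := by omega
          have := Nat.findGreatest_is_greatest (hr0def ▸ hgt) (show r ≤ k - 1 by omega)
          omega
      rw [if_neg hnQ]
  · have hcnt : Multiset.count x E = 0 := Multiset.count_eq_zero.mpr hxE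
    rw [hcnt]
    apply Finset.sum_eq_zero
    intro r _
    exact ite_self 0

/-- The row entries of the hook tableau beyond the first column. -/
def rowE (S : ℕ → ℕ → Multiset ℕ) (a : ℕ) : Multiset ℕ := ∑ c ∈ Finset.range a, S 0 (c + 1)

/-- The inverse map: hook tableaux to single-column multiset-valued tableaux. -/
def phi (k a : ℕ) (S : ℕ → ℕ → Multiset ℕ) : ℕ → ℕ → Multiset ℕ := fun r c =>
  if c = 0 ∧ r < k then
    {mhead (S r 0)} + (rowE S a).filter (rowPred (fun r' => mhead (S r' 0)) k r)
  else 0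

variable {S : ℕ → ℕ → Multiset ℕ}

lemma phi_inverse (hk : 0 < k) (hS : IsMVT n (hookShape k a) S)
    (hcard : ∀ r c, InShape (hookShape k a) r c → Multiset.card (S r c) = 1) :
    IsMVT n (List.replicate k 1) (phi k a S) ∧ colEntries (phi k a S) k = k + a ∧
      psi k (phi k a S) = S := by
  set mS : ℕ → ℕ := fun r => mhead (S r 0) with hmS
  set eS : ℕ → ℕ := fun c => mhead (S 0 c) with heS
  have hsing : ∀ r c, InShape (hookShape k a) r c → S r c = {mhead (S r c)} := by
    intro r c h
    obtain ⟨x, hx⟩ := Multiset.card_eq_one.mp (hcard r c h)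
    rw [hx, mhead_eq (Multiset.mem_singleton_self x) (fun y hy => le_of_eq
      (Multiset.mem_singleton.mp hy).symm)]
  have hcol0 : ∀ r, r < k → S r 0 = {mS r} := by
    intro r hr
    exact hsing r 0 ((inShape_hook hk).mpr (by omega))
  have hrow0 : ∀ c, c < a + 1 → S 0 c = {eS c} := by
    intro c hc
    exact hsing 0 c ((inShape_hook hk).mpr (by omega))
  have hmS0 : mS 0 = eS 0 := rfl
  have hstrict : ∀ r, r + 1 < k → mS r < mS (r + 1) := by
    intro r hr
    have h := hS.2.2.2.2 r 0 ((inShape_hook hk).mpr (by omega))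
    apply h
    · rw [hcol0 r (by omega)]; exact Multiset.mem_singleton_self _
    · rw [hcol0 (r + 1) hr]; exact Multiset.mem_singleton_self _
  have heweak : ∀ c c', c ≤ c' → c' < a + 1 → eS c ≤ eS c' := by
    have hstep : ∀ c, c + 1 < a + 1 → eS c ≤ eS (c + 1) := by
      intro c hc
      have h := hS.2.2.2.1 0 c ((inShape_hook hk).mpr (by omega))
      apply h
      · rw [hrow0 c (by omega)]; exact Multiset.mem_singleton_self _
      · rw [hrow0 (c + 1) hc]; exact Multiset.mem_singleton_self _
    intro c c'
    induction c' with
    | zero => intro h _; rw [Nat.le_zero.mp h]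
    | succ j ih =>
      intro h hlt
      rcases Nat.eq_or_lt_of_le h with rfl | h2
      · rfl
      · exact le_trans (ih (by omega) (by omega)) (hstep j hlt)
  have hEmem : ∀ x ∈ rowE S a, ∃ c, 0 < c ∧ c < a + 1 ∧ x = eS c := by
    intro x hx
    rw [rowE, Multiset.mem_sum] at hx
    obtain ⟨c, hc, hx⟩ := hx
    rw [Finset.mem_range] at hc
    rw [hrow0 (c + 1) (by omega), Multiset.mem_singleton] at hx
    exact ⟨c + 1, by omega, by omega, hx⟩
  have hElb : ∀ x ∈ rowE S a, mS 0 ≤ x := by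
    intro x hx
    obtain ⟨c, hc1, hc2, rfl⟩ := hEmem x hx
    rw [hmS0]
    exact heweak 0 c (by omega) hc2
  have hpart := partition_filter mS hk hstrict (rowE S a) hElb
  have hphi_in : ∀ r, r < k → phi k a S r 0
      = {mS r} + (rowE S a).filter (rowPred mS k r) := by
    intro r hr
    rw [phi, if_pos ⟨rfl, hr⟩]
  have hphi_out : ∀ r c, ¬ (c = 0 ∧ r < k) → phi k a S r c = 0 := by
    intro r c h
    rw [phi, if_neg h]
  -- membership description for phi boxes
  have hbox : ∀ r, r < k → ∀ x ∈ phi k a S r 0,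
      (x = mS r) ∨ (mS r ≤ x ∧ (r + 1 = k ∨ x < mS (r + 1)) ∧ x ∈ rowE S a) := by
    intro r hr x hx
    rw [hphi_in r hr, Multiset.mem_add] at hx
    rcases hx with hx | hx
    · exact Or.inl (Multiset.mem_singleton.mp hx)
    · rw [Multiset.mem_filter] at hx
      exact Or.inr ⟨hx.2.1, hx.2.2, hx.1⟩
  have hlb : ∀ r, r < k → ∀ x ∈ phi k a S r 0, mS r ≤ x := by
    intro r hr x hx
    rcases hbox r hr x hx with rfl | ⟨h1, _, _⟩
    · rfl
    · exact h1
  have hub : ∀ r, r + 1 < k → ∀ x ∈ phi k a S r 0, x < mS (r + 1) := by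
    intro r hr x hx
    rcases hbox r (by omega) x hx with rfl | ⟨_, h2, _⟩
    · exact hstrict r hr
    · rcases h2 with h | h
      · omega
      · exact h
  have hMVT : IsMVT n (List.replicate k 1) (phi k a S) := by
    refine ⟨?_, ?_, ?_, ?_, ?_⟩
    · intro r c h
      rw [inShape_col] at h
      obtain ⟨rfl, hr⟩ := h
      rw [hphi_in r hr]
      intro habs
      have : mS r ∈ ({mS r} + (rowE S a).filter (rowPred mS k r) : Multiset ℕ) :=
        Multiset.mem_add.mpr (Or.inl (Multiset.mem_singleton_self _))
      rw [habs] at this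
      simp at this
    · intro r c h
      rw [inShape_col] at h
      exact hphi_out r c (by tauto)
    · intro r c x hx
      by_cases h : c = 0 ∧ r < k
      · obtain ⟨rfl, hr⟩ := h
        rcases hbox r hr x hx with rfl | ⟨_, _, hmem⟩
        · have : mS r ∈ S r 0 := by
            rw [hcol0 r hr]; exact Multiset.mem_singleton_self _
          exact hS.2.2.1 r 0 _ this
        · obtain ⟨c', hc1, hc2, rfl⟩ := hEmem _ hmem
          have : eS c' ∈ S 0 c' := by
            rw [hrow0 c' hc2]; exact Multiset.mem_singleton_self _
          exact hS.2.2.1 0 c' _ this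
      · rw [hphi_out r c h] at hx
        simp at hx
    · intro r c h
      rw [inShape_col] at h
      omega
    · intro r c h x hx y hy
      rw [inShape_col] at h
      obtain ⟨rfl, hr⟩ := h
      exact lt_of_lt_of_le (hub r hr x hx) (hlb (r + 1) hr y hy)
  have hE' : colEntries (phi k a S) k = k + a := by
    have hcardE : Multiset.card (rowE S a) = a := by
      rw [rowE, card_finsum]
      rw [Finset.sum_congr rfl (fun c hc => hcard 0 (c + 1)
        ((inShape_hook hk).mpr (Or.inl ⟨rfl, by
          rw [Finset.mem_range] at hc; omega⟩)))]
      simp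
    rw [colEntries]
    rw [Finset.sum_congr rfl (fun r hr => by
      rw [hphi_in r (Finset.mem_range.mp hr), Multiset.card_add, Multiset.card_singleton])]
    rw [Finset.sum_add_distrib, ← card_finsum, hpart, hcardE]
    simp [add_comm]
  have hminE : ∀ r, r < k → minEntry (phi k a S) r = mS r := by
    intro r hr
    rw [minEntry_eq_mhead]
    apply mhead_eq
    · rw [hphi_in r hr]
      exact Multiset.mem_add.mpr (Or.inl (Multiset.mem_singleton_self _))
    · exact hlb r hr
  -- the extras of phi S
  have hLcoe : (↑((List.range a).map (fun c => eS (c + 1))) : Multiset ℕ) = rowE S a := by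
    rw [← sum_singletons, rowE]
    exact Finset.sum_congr rfl (fun c hc => (hrow0 (c + 1)
      (by rw [Finset.mem_range] at hc; omega)).symm)
  have hLsorted : ((List.range a).map (fun c => eS (c + 1))).Pairwise (· ≤ ·) := by
    rw [List.pairwise_map]
    refine (List.pairwise_lt_range (n := a)).imp_of_mem ?_
    intro c c' hc hc' hlt
    rw [List.mem_range] at hc hc'
    exact heweak (c + 1) (c' + 1) (by omega) (by omega)
  have hextras : extras (phi k a S) k = (List.range a).map (fun c => eS (c + 1)) := by
    have hcoe : (↑(extras (phi k a S) k) : Multiset ℕ) = rowE S a := by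
      have htot := totalM_decomp hMVT
      have htot2 : ∑ r ∈ Finset.range k, phi k a S r 0
          = (↑((List.range k).map (minEntry (phi k a S))) : Multiset ℕ) + rowE S a := by
        rw [Finset.sum_congr rfl (fun r hr => hphi_in r (Finset.mem_range.mp hr)),
          Finset.sum_add_distrib, hpart, ← sum_singletons]
        congr 1
        exact Finset.sum_congr rfl (fun r hr =>
          by rw [hminE r (Finset.mem_range.mp hr)])
      rw [htot] at htot2
      exact add_left_cancel htot2
    refine List.Perm.eq_of_pairwise' extras_sorted hLsorted (Multiset.coe_eq_coe.mp ?_)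
    rw [hcoe, hLcoe]
  have hpsi : psi k (phi k a S) = S := by
    funext r c
    by_cases h : InShape (hookShape k a) r c
    · rcases (inShape_hook hk).mp h with ⟨rfl, hc⟩ | ⟨h1, h2, rfl⟩
      · rcases Nat.eq_zero_or_pos c with rfl | hcpos
        · rw [psi_col0 hk, hminE 0 hk, hcol0 0 hk]
        · rw [psi_row0 hE' hcpos hc, hextras, hrow0 c hc]
          congr 1
          rw [List.getD_eq_getElem _ 0 (by simp; omega)]
          simp only [List.getElem_map, List.getElem_range]
          congr 1
          omega
      · rw [psi_col0 h2, hminE r h2, hcol0 r h2]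
    · rw [psi_zero hk hE' h, hS.2.1 r c h]
  exact ⟨hMVT, hE', hpsi⟩

end Surjective


/-- The map `ψ` is a bijection from the multiset-valued tableaux of
single-column shape `1^k` with entries at most `n` and excess `a` onto the semistandard
Young tableaux (all boxes singletons) of hook shape `(a+1, 1^{k-1})` with entries at most
`n`, and it preserves reading words. -/
theorem mvt_column_hook_bijection (n k a : ℕ) (hk : 0 < k) :
    (∀ T, IsMVT n (List.replicate k 1) T → colEntries T k = k + a →
      IsMVT n (hookShape k a) (psi k T) ∧
      (∀ r c, InShape (hookShape k a) r c → Multiset.card (psi k T r c) = 1) ∧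
      mvtWord (hookShape k a) (psi k T) = mvtWord (List.replicate k 1) T) ∧
    Set.BijOn (psi k)
      {T | IsMVT n (List.replicate k 1) T ∧ colEntries T k = k + a}
      {S | IsMVT n (hookShape k a) S ∧
        ∀ r c, InShape (hookShape k a) r c → Multiset.card (S r c) = 1} := by
  refine ⟨?_, ?_, ?_, ?_⟩
  · intro T hT hE
    obtain ⟨h1, h2⟩ := psi_forward hk hT hE
    exact ⟨h1, h2, by rw [word_hook hk hT hE, word_col hk hT]⟩
  · intro T hT
    exact ⟨(psi_forward hk hT.1 hT.2).1, (psi_forward hk hT.1 hT.2).2⟩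
  · intro T1 h1 T2 h2 heq
    exact psi_injective hk h1.1 h1.2 h2.1 h2.2 heq
  · intro S hS
    obtain ⟨hMVT, hE', hpsi⟩ := phi_inverse hk hS.1 hS.2
    exact ⟨phi k a S, ⟨hMVT, hE'⟩, hpsi⟩
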